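/- arXiv:1507.06010 — 2 statements merged into one kernel-verified Lean document; each statement's English description precedes it below -/
import Mathlib

section
/- For every logic program P over Σ, every clause C over Σ, and every idempotent substitution σ over Σ, and relative to a fixed scheme for choosing the fresh Tier 2 variables and for renaming apart the variables of program clauses, there exists a unique pair (dom(T), T) with dom(T) a non-empty tree language and T : dom(T) → Term(Σ) ∪ Clause(Σ) ∪ V_R satisfying conditions (1)–(4) of the definition of the rewriting tree rew(P, C, σ). -/
namespace T3C

/-- A (finitely branching) tree language: prefix-closed, closed under smaller
sibling indices, and finitely branching. -/
def IsTreeLang (L : Set (List ℕ)) : Prop :=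
  (∀ (w : List ℕ) (j : ℕ), w ++ [j] ∈ L → w ∈ L) ∧
  (∀ (w : List ℕ) (i j : ℕ), w ++ [j] ∈ L → i < j → w ++ [i] ∈ L) ∧
  (∀ w ∈ L, { i : ℕ | w ++ [i] ∈ L }.Finite)

/-- A term tree over a signature `Sig` (with arity function `ar`) and
variables `V` (each of arity `0`): a function from a non-empty tree language
to `Sig ⊕ V` satisfying the arity condition.  Nodes outside the domain are
labelled `none`. -/
structure Tm (Sig V : Type) (ar : Sig → ℕ) where
  label : List ℕ → Option (Sig ⊕ V)
  root : label [] ≠ none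
  tl : IsTreeLang { w | label w ≠ none }
  arity : ∀ w a, label w = some a →
    { i : ℕ | label (w ++ [i]) ≠ none }.ncard = Sum.elim ar (fun _ => 0) a

variable {Sig V : Type} {ar : Sig → ℕ}

/-- A term tree is finite if its domain tree language is finite. -/
def Tm.Fin (t : Tm Sig V ar) : Prop := { w | t.label w ≠ none }.Finite

/-- A substitution: a total function from variables to finite term trees. -/
structure Subst (Sig V : Type) (ar : Sig → ℕ) where
  toFun : V → Tm Sig V ar
  fin : ∀ X, (toFun X).Fin

/-- Auxiliary function computing the label of `σ(t)` at `u ++ v`, scanning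
the word for the first variable node of `t`. -/
def subAppAux (σ : V → Tm Sig V ar) (t : Tm Sig V ar) :
    List ℕ → List ℕ → Option (Sig ⊕ V)
  | u, [] =>
    match t.label u with
    | some (Sum.inr X) => (σ X).label []
    | o => o
  | u, i :: v =>
    match t.label u with
    | some (Sum.inr X) => (σ X).label (i :: v)
    | _ => subAppAux σ t (u ++ [i]) v

/-- `sapp σ t` is the label function of the application `σ(t)` of the
substitution `σ` to the term tree `t`. -/
def sapp (σ : Subst Sig V ar) (t : Tm Sig V ar) : List ℕ → Option (Sig ⊕ V) :=
  subAppAux σ.toFun t []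

/-- `σ` is a matcher of `t` against `u` iff `σ(t) = u`. -/
def IsMatcher (σ : Subst Sig V ar) (t u : Tm Sig V ar) : Prop :=
  sapp σ t = u.label

/-- `σ` is a unifier of `t` and `u` iff `σ(t) = σ(u)`. -/
def IsUnifier (σ : Subst Sig V ar) (t u : Tm Sig V ar) : Prop :=
  sapp σ t = sapp σ u

/-- `σ₁` is more general than `σ₂` iff `σσ₁ = σ₂` for some substitution `σ`. -/
def MoreGen (σ₁ σ₂ : Subst Sig V ar) : Prop :=
  ∃ σ : Subst Sig V ar, ∀ X, sapp σ (σ₁.toFun X) = (σ₂.toFun X).label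

/-- A most general matcher of `t` against `u`. -/
def IsMGM (θ : Subst Sig V ar) (t u : Tm Sig V ar) : Prop :=
  IsMatcher θ t u ∧ ∀ θ' : Subst Sig V ar, IsMatcher θ' t u → MoreGen θ θ'

/-- A most general unifier of `t` and `u`. -/
def IsMGU (σ : Subst Sig V ar) (t u : Tm Sig V ar) : Prop :=
  IsUnifier σ t u ∧ ∀ σ' : Subst Sig V ar, IsUnifier σ' t u → MoreGen σ σ'

/-- Idempotence: `σσ = σ`. -/
def Idem (σ : Subst Sig V ar) : Prop :=
  ∀ X, sapp σ (σ.toFun X) = (σ.toFun X).label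

open scoped Classical

/-- The term tree consisting of a single variable node. -/
def varTm (X : V) : Tm Sig V ar where
  label := fun w => if w = [] then some (Sum.inr X) else none
  root := by simp
  tl := by
    refine ⟨?_, ?_, ?_⟩
    · intro w j hwj
      exfalso
      simp only [Set.mem_setOf_eq] at hwj
      rw [if_neg (by simp)] at hwj
      exact hwj rfl
    · intro w i j hwj hij
      exfalso
      simp only [Set.mem_setOf_eq] at hwj
      rw [if_neg (by simp)] at hwj
      exact hwj rfl
    · intro w _
      apply Set.Finite.subset Set.finite_empty
      intro i hi
      simp only [Set.mem_setOf_eq] at hi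
      rw [if_neg (by simp)] at hi
      exact absurd rfl hi
  arity := by
    intro w a hwa
    by_cases hw : w = []
    · subst hw
      simp only [if_pos rfl] at hwa
      cases Option.some.inj hwa
      have hset : { i : ℕ |
          (fun w => if w = ([] : List ℕ) then some (Sum.inr X : Sig ⊕ V) else none)
            (([] : List ℕ) ++ [i]) ≠ none } = ∅ := by
        ext i
        simp
      rw [hset]
      simp
    · simp only [if_neg hw] at hwa
      exact absurd hwa (by simp)

lemma varTm_fin (X : V) : (varTm X : Tm Sig V ar).Fin := by
  apply Set.Finite.subset (Set.finite_singleton ([] : List ℕ))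
  intro w hw
  simp only [Set.mem_setOf_eq, varTm] at hw
  by_cases h : w = []
  · simpa using h
  · rw [if_neg h] at hw; exact absurd rfl hw

/-- The identity substitution. -/
def idS : Subst Sig V ar := ⟨fun X => varTm X, fun X => varTm_fin X⟩

/-- A clause `head ← B₀, …, Bₙ`.  (Goal clauses are clauses whose head is built
from the reserved goal symbol `?` of the signature.) -/
structure Clause (Sig V : Type) (ar : Sig → ℕ) where
  head : Tm Sig V ar
  body : List (Tm Sig V ar)

/-- A logic program: a function from `{0, …, n} ⊆ ℕ` to (non-goal) clauses,
encoded as a non-empty list of clauses. -/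
structure Prog (Sig V : Type) (ar : Sig → ℕ) where
  clauses : List (Clause Sig V ar)
  ne : clauses ≠ []

/-- Application of a substitution to a term tree, as a term tree (the label
function of the result is `sapp σ t`). -/
noncomputable def appT (σ : Subst Sig V ar) (t : Tm Sig V ar) : Tm Sig V ar :=
  if h : ∃ t' : Tm Sig V ar, t'.label = sapp σ t then h.choose else t

/-- Application of a substitution to a clause, homomorphically. -/
noncomputable def appC (σ : Subst Sig V ar) (C : Clause Sig V ar) : Clause Sig V ar :=
  ⟨appT σ C.head, C.body.map (appT σ)⟩

/-- Composition of substitutions: `(compS σ' σ)(X) = σ'(σ(X))`. -/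
noncomputable def compS (σ' σ : Subst Sig V ar) : Subst Sig V ar :=
  if h : ∃ τ : Subst Sig V ar, ∀ X, (τ.toFun X).label = sapp σ' (σ.toFun X) then
    h.choose
  else σ'

/-- The substitution renaming variables along `ρ`. -/
def renSubst (ρ : V → V) : Subst Sig V ar := ⟨fun X => varTm (ρ X), fun X => varTm_fin (ρ X)⟩

/-- `C'` is obtained from `C` by (injectively) renaming its variables. -/
def IsRenaming (C C' : Clause Sig V ar) : Prop :=
  ∃ ρ : V → V, Function.Injective ρ ∧
    C'.head.label = sapp (renSubst ρ) C.head ∧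
    C'.body.length = C.body.length ∧
    ∀ (j : ℕ) (t t' : Tm Sig V ar), C.body[j]? = some t → C'.body[j]? = some t' →
      t'.label = sapp (renSubst ρ) t

/-- Labels of nodes of rewriting trees: term trees (and-nodes), clauses
(or-nodes), or Tier 2 variables from `VR` (variable or-nodes). -/
abbrev RLab (Sig V : Type) (ar : Sig → ℕ) (VR : Type) : Type :=
  Tm Sig V ar ⊕ (Clause Sig V ar ⊕ VR)

/-- A fixed scheme of proof-search data: a deterministic most general matcher
and most general unifier algorithm, a renaming-apart scheme for program
clauses (renaming determined by the node at which the clause is used, as in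
the renaming-apart convention), and a scheme of fresh Tier 2 variables
(likewise determined by the node). -/
structure Scheme (Sig V : Type) (ar : Sig → ℕ) (VR : Type) where
  mgm : Tm Sig V ar → Tm Sig V ar → Option (Subst Sig V ar)
  mgm_sound : ∀ t u θ, mgm t u = some θ → IsMGM θ t u
  mgm_complete : ∀ t u, (∃ θ : Subst Sig V ar, IsMatcher θ t u) → (mgm t u).isSome
  mgu : Tm Sig V ar → Tm Sig V ar → Option (Subst Sig V ar)
  mgu_sound : ∀ t u σ, mgu t u = some σ → IsMGU σ t u
  mgu_complete : ∀ t u, (∃ σ : Subst Sig V ar, IsUnifier σ t u) → (mgu t u).isSome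
  ren : List ℕ → Clause Sig V ar → Clause Sig V ar
  ren_renaming : ∀ w C, IsRenaming C (ren w C)
  fresh : List ℕ → VR
  fresh_inj : Function.Injective fresh

variable {VR : Type}

/-- Conditions (1)–(4) of the definition of the rewriting tree `rew(P, C, σ)`
(Definition 4.1): (1) the root is labelled `σ(C)` and its children are the
body of `σ(C)`; (2) or-nodes are clauses or Tier 2 variables, Tier 2 variable
nodes are leaves, and the children of an or-node labelled by a clause `B`
(which is `σ(θ(P(i)))` by (3)) are the body terms `σ(θ(P(i)(j)))` of `B`;
(3) each and-node `T(w)` (a term) has, for every clause index `i` of `P`, the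
child `T(wi) = σ(θ(P(i)))` if `head(P(i))` matches `T(w)` via the mgm `θ`
(with `P(i)` renamed apart at node `wi`), and a fresh Tier 2 variable
(determined by the node `wi`) otherwise; (4) no other words are in the
domain. -/
def RewSpec (S : Scheme Sig V ar VR) (P : Prog Sig V ar) (C : Clause Sig V ar)
    (σ : Subst Sig V ar) (T : List ℕ → Option (RLab Sig V ar VR)) : Prop :=
  T [] = some (Sum.inr (Sum.inl (appC σ C))) ∧
  (∀ (w : List ℕ) (B : Clause Sig V ar), T w = some (Sum.inr (Sum.inl B)) →
    ∀ j : ℕ, T (w ++ [j]) = (B.body[j]?).map Sum.inl) ∧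
  (∀ (w : List ℕ) (X : VR), T w = some (Sum.inr (Sum.inr X)) →
    ∀ i : ℕ, T (w ++ [i]) = none) ∧
  (∀ (w : List ℕ) (t : Tm Sig V ar), T w = some (Sum.inl t) →
    ∀ i : ℕ, T (w ++ [i]) =
      match P.clauses[i]? with
      | none => none
      | some Ci =>
        match S.mgm (S.ren (w ++ [i]) Ci).head t with
        | some θ => some (Sum.inr (Sum.inl (appC σ (appC θ (S.ren (w ++ [i]) Ci)))))
        | none => some (Sum.inr (Sum.inr (S.fresh (w ++ [i]))))) ∧
  (∀ (w : List ℕ) (i : ℕ), T (w ++ [i]) ≠ none → T w ≠ none)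

/-- The rewriting tree `rew(P, C, σ)` (as a label function). -/
noncomputable def rew (S : Scheme Sig V ar VR) (P : Prog Sig V ar)
    (C : Clause Sig V ar) (σ : Subst Sig V ar) : List ℕ → Option (RLab Sig V ar VR) :=
  if h : ∃ T, RewSpec S P C σ T then h.choose else fun _ => none

/-- Application of a substitution to the label of a node of a rewriting tree
(identity on Tier 2 variables). -/
noncomputable def rlabApp (σ : Subst Sig V ar) :
    RLab Sig V ar VR → RLab Sig V ar VR
  | Sum.inl t => Sum.inl (appT σ t)
  | Sum.inr (Sum.inl B) => Sum.inr (Sum.inl (appC σ B))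
  | Sum.inr (Sum.inr X) => Sum.inr (Sum.inr X)

/-- Definition 4.4: the application `σ'(T)` of a substitution `σ'` to a
rewriting tree `T = rew(P, C, σ)`: on and-nodes and non-variable or-nodes it
acts label-wise; below a Tier 2 variable or-node `T(wi)` whose parent
and-node is labelled `t`, if the mgm `θ` of `head(P(i))` (renamed apart at
`wi`) against `σ'(t) = (σ'(T))(w)` exists then `(σ'(T))(wiv) =
rew(P, θ(P(i)), σ'σ)(v)`, and otherwise `(σ'(T))(wi) = T(wi)` is unchanged. -/
noncomputable def rsub (S : Scheme Sig V ar VR) (P : Prog Sig V ar)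
    (σ' σ : Subst Sig V ar) (T : List ℕ → Option (RLab Sig V ar VR)) :
    List ℕ → Option (RLab Sig V ar VR) := fun w =>
  if h : ∃ p : List ℕ × ℕ × List ℕ × Tm Sig V ar,
      w = (p.1 ++ [p.2.1]) ++ p.2.2.1 ∧
      (∃ X : VR, T (p.1 ++ [p.2.1]) = some (Sum.inr (Sum.inr X))) ∧
      T p.1 = some (Sum.inl p.2.2.2) then
    match P.clauses[h.choose.2.1]? with
    | none => T w
    | some Ci =>
      match S.mgm (S.ren (h.choose.1 ++ [h.choose.2.1]) Ci).head (appT σ' h.choose.2.2.2) with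
      | some θ =>
          rew S P (appC θ (S.ren (h.choose.1 ++ [h.choose.2.1]) Ci)) (compS σ' σ) h.choose.2.2.1
      | none => T w
  else (T w).map (rlabApp σ')

/-! ### Auxiliary construction for statement11 -/

variable {Sig V VR : Type} {ar : Sig → ℕ}

/-- The label of a child node, computed from the label of its parent. -/
noncomputable def rstep (S : Scheme Sig V ar VR) (P : Prog Sig V ar)
    (σ : Subst Sig V ar) (w : List ℕ) (i : ℕ) :
    Option (RLab Sig V ar VR) → Option (RLab Sig V ar VR)
  | none => none
  | some (Sum.inl t) =>
      match P.clauses[i]? with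
      | none => none
      | some Ci =>
        match S.mgm (S.ren (w ++ [i]) Ci).head t with
        | some θ => some (Sum.inr (Sum.inl (appC σ (appC θ (S.ren (w ++ [i]) Ci)))))
        | none => some (Sum.inr (Sum.inr (S.fresh (w ++ [i]))))
  | some (Sum.inr (Sum.inl B)) => (B.body[i]?).map Sum.inl
  | some (Sum.inr (Sum.inr _)) => none

/-- Build the rewriting tree, on reversed words. -/
noncomputable def buildRev (S : Scheme Sig V ar VR) (P : Prog Sig V ar)
    (C : Clause Sig V ar) (σ : Subst Sig V ar) : List ℕ → Option (RLab Sig V ar VR)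
  | [] => some (Sum.inr (Sum.inl (appC σ C)))
  | i :: rw => rstep S P σ rw.reverse i (buildRev S P C σ rw)

/-- The canonical rewriting tree. -/
noncomputable def build (S : Scheme Sig V ar VR) (P : Prog Sig V ar)
    (C : Clause Sig V ar) (σ : Subst Sig V ar) (w : List ℕ) :
    Option (RLab Sig V ar VR) :=
  buildRev S P C σ w.reverse

lemma build_snoc (S : Scheme Sig V ar VR) (P : Prog Sig V ar)
    (C : Clause Sig V ar) (σ : Subst Sig V ar) (w : List ℕ) (i : ℕ) :
    build S P C σ (w ++ [i]) = rstep S P σ w i (build S P C σ w) := by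
  simp [build, buildRev]


lemma rstep_sib {S : Scheme Sig V ar VR} {P : Prog Sig V ar} {σ : Subst Sig V ar}
    {w : List ℕ} {i j : ℕ} {o : Option (RLab Sig V ar VR)} (hij : i < j)
    (hj : rstep S P σ w j o ≠ none) : rstep S P σ w i o ≠ none := by
  rcases o with _ | (t | B | X)
  · exact absurd rfl hj
  · simp only [rstep] at hj ⊢
    cases hcj : P.clauses[j]? with
    | none => rw [hcj] at hj; exact absurd rfl hj
    | some Cj =>
      have hjl : j < P.clauses.length := (List.getElem?_eq_some_iff.mp hcj).1
      have hil : i < P.clauses.length := lt_trans hij hjl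
      rw [List.getElem?_eq_getElem hil]
      cases hm : S.mgm (S.ren (w ++ [i]) (P.clauses[i]'hil)).head t <;> simp [hm]
  · simp only [rstep] at hj ⊢
    cases hcj : B.body[j]? with
    | none => rw [hcj] at hj; exact absurd rfl hj
    | some u =>
      have hjl : j < B.body.length := (List.getElem?_eq_some_iff.mp hcj).1
      have hil : i < B.body.length := lt_trans hij hjl
      rw [List.getElem?_eq_getElem hil]
      simp
  · exact absurd rfl hj

lemma rstep_lt_clauses {S : Scheme Sig V ar VR} {P : Prog Sig V ar} {σ : Subst Sig V ar}
    {w : List ℕ} {i : ℕ} {t : Tm Sig V ar}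
    (h : rstep S P σ w i (some (Sum.inl t)) ≠ none) : i < P.clauses.length := by
  by_contra hge
  have hc : P.clauses[i]? = none := List.getElem?_eq_none (le_of_not_gt hge)
  simp only [rstep, hc] at h
  exact h rfl

lemma rstep_lt_body {S : Scheme Sig V ar VR} {P : Prog Sig V ar} {σ : Subst Sig V ar}
    {w : List ℕ} {i : ℕ} {B : Clause Sig V ar}
    (h : rstep S P σ w i (some (Sum.inr (Sum.inl B))) ≠ none) : i < B.body.length := by
  by_contra hge
  have hc : B.body[i]? = none := List.getElem?_eq_none (le_of_not_gt hge)
  simp only [rstep, hc] at h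
  exact h rfl

lemma rstep_var {S : Scheme Sig V ar VR} {P : Prog Sig V ar} {σ : Subst Sig V ar}
    {w : List ℕ} {i : ℕ} {X : VR} :
    rstep S P σ w i (some (Sum.inr (Sum.inr X))) = none := rfl

/-- Any tree satisfying the spec satisfies the step equation. -/
lemma spec_step {S : Scheme Sig V ar VR} {P : Prog Sig V ar}
    {C : Clause Sig V ar} {σ : Subst Sig V ar}
    {T : List ℕ → Option (RLab Sig V ar VR)} (hT : RewSpec S P C σ T)
    (w : List ℕ) (i : ℕ) : T (w ++ [i]) = rstep S P σ w i (T w) := by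
  obtain ⟨h1, h2, h3, h4, h5⟩ := hT
  cases h : T w with
  | none =>
    have : T (w ++ [i]) = none := by
      by_contra hne
      exact (h5 w i hne) h
    simp [this, rstep]
  | some a =>
    match a with
    | Sum.inl t => exact h4 w t h i
    | Sum.inr (Sum.inl B) => exact h2 w B h i
    | Sum.inr (Sum.inr X) => exact h3 w X h i

lemma build_spec (S : Scheme Sig V ar VR) (P : Prog Sig V ar)
    (C : Clause Sig V ar) (σ : Subst Sig V ar) :
    RewSpec S P C σ (build S P C σ) := by
  refine ⟨rfl, ?_, ?_, ?_, ?_⟩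
  · intro w B hB j
    rw [build_snoc, hB]; rfl
  · intro w X hX i
    rw [build_snoc, hX]; rfl
  · intro w t ht i
    rw [build_snoc, ht]; rfl
  · intro w i hne
    rw [build_snoc] at hne
    intro h
    rw [h] at hne
    exact hne rfl

lemma spec_unique {S : Scheme Sig V ar VR} {P : Prog Sig V ar}
    {C : Clause Sig V ar} {σ : Subst Sig V ar}
    {T : List ℕ → Option (RLab Sig V ar VR)} (hT : RewSpec S P C σ T) :
    T = build S P C σ := by
  funext w
  induction w using List.reverseRecOn with
  | nil => rw [hT.1]; rfl
  | append_singleton w i ih =>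
    rw [spec_step hT, spec_step (build_spec S P C σ), ih]

end T3C

open T3C in
/-- for every logic program `P`, clause `C`, and idempotent
substitution `σ`, and relative to a fixed scheme (for mgms, for renaming
program clauses apart, and for choosing fresh Tier 2 variables), there is a
unique function `T` satisfying conditions (1)–(4) of the definition of the
rewriting tree `rew(P, C, σ)`; moreover its domain is a non-empty tree
language. -/
theorem statement11 {Sig V VR : Type} [Nonempty Sig] [Countable V] [Infinite V]
    [Countable VR] [Infinite VR] {ar : Sig → ℕ}
    (S : Scheme Sig V ar VR) (P : Prog Sig V ar) (C : Clause Sig V ar)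
    (σ : Subst Sig V ar) (hσ : Idem σ) :
    (∃! T : List ℕ → Option (RLab Sig V ar VR), RewSpec S P C σ T) ∧
    (∀ T : List ℕ → Option (RLab Sig V ar VR), RewSpec S P C σ T →
      IsTreeLang { w | T w ≠ none } ∧ ({ w | T w ≠ none } : Set (List ℕ)).Nonempty) := by
  constructor
  · exact ⟨build S P C σ, build_spec S P C σ, fun T hT => spec_unique hT⟩
  · intro T hT
    refine ⟨⟨?_, ?_, ?_⟩, ⟨[], ?_⟩⟩
    · intro w j h
      exact hT.2.2.2.2 w j h
    · intro w i j hj hij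
      simp only [Set.mem_setOf_eq] at hj ⊢
      rw [spec_step hT] at hj ⊢
      exact rstep_sib hij hj
    · intro w hw
      cases hwv : T w with
      | none => exact absurd hwv hw
      | some a =>
        have key : ∀ i, T (w ++ [i]) ≠ none → rstep S P σ w i (some a) ≠ none := by
          intro i h
          rwa [spec_step hT, hwv] at h
        rcases a with t | B | X
        · apply Set.Finite.subset (Set.finite_Iio P.clauses.length)
          intro i hi
          exact rstep_lt_clauses (key i hi)
        · apply Set.Finite.subset (Set.finite_Iio B.body.length)
          intro i hi
          exact rstep_lt_body (key i hi)
        · apply Set.Finite.subset Set.finite_empty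
          intro i hi
          exact absurd rstep_var (key i hi)
    · simp only [Set.mem_setOf_eq, hT.1]
      exact Option.some_ne_none _
end

section
/- For every logic program P over Σ and every clause C over Σ, relative to a fixed scheme for choosing fresh variables, there exists a unique function D : dom(D) → Rew^ω(P) on a tree language dom(D) such that D(ε) = rew(P, C, id) and, for every w ∈ dom(D) and every i in arity(D(w)) with i = pos(k), wi ∈ dom(D) and D(wi) = Trans(P, D(w), X_k); that is, the derivation tree der(P, C) exists and is unique up to renaming. -/
namespace T3C

variable {Sig V : Type} {ar : Sig → ℕ}

open scoped Classical

variable {VR : Type}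

/-- The Tier 2 variable `X` occurs in the rewriting tree `T`. -/
def OccursIn (T : List ℕ → Option (RLab Sig V ar VR)) (X : VR) : Prop :=
  ∃ w : List ℕ, T w = some (Sum.inr (Sum.inr X))

/-- `e : ℕ → Option VR` enumerates the Tier 2 variables occurring in `T`
without repetition: it is (the inverse of) a bijection `pos` from the set
`indices(T)` of (indices of) `V_R`-variables of `T` onto the (possibly
infinite) arity of `T`. -/
def Enumerates (T : List ℕ → Option (RLab Sig V ar VR)) (e : ℕ → Option VR) : Prop :=
  (∀ (i : ℕ) (X : VR), e i = some X → OccursIn T X) ∧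
  (∀ X : VR, OccursIn T X → ∃! i : ℕ, e i = some X) ∧
  (∀ i j : ℕ, i ≤ j → e i = none → e j = none)

/-- Definition 4.6: the transition `Trans(P, T, X)` for `T = rew(P, C, σ')`
and a Tier 2 variable `X = T(wi)` with parent and-node `T(w)`: if the
external resolvent (the mgu of `head(P(i))`, renamed apart at `wi`, and
`T(w)`) is null then the result is the empty tree (`none`); otherwise the
result is (the base substitution `σσ'` of) the rewriting tree
`T_X = rew(P, C, σσ')`. -/
noncomputable def trans (S : Scheme Sig V ar VR) (P : Prog Sig V ar)
    (C : Clause Sig V ar) (σ' : Subst Sig V ar) (X : VR) :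
    Option (Subst Sig V ar) :=
  if h : ∃ p : List ℕ × ℕ × Tm Sig V ar,
      rew S P C σ' (p.1 ++ [p.2.1]) = some (Sum.inr (Sum.inr X)) ∧
      rew S P C σ' p.1 = some (Sum.inl p.2.2) then
    match P.clauses[h.choose.2.1]? with
    | none => none
    | some Ci =>
        (S.mgu (S.ren (h.choose.1 ++ [h.choose.2.1]) Ci).head h.choose.2.2).map
          (fun σ => compS σ σ')
  else none

/-- Definition 4.7: the derivation tree `der(P, C)`.  A node of the
derivation tree is encoded by the base substitution of the rewriting tree
labelling it (`some (some σw)` encodes the rewriting tree `rew(P, C, σw)`,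
`some none` encodes the empty rewriting tree, and `none` means the node is
outside the domain): the root is the rewriting tree `rew(P, C, id)`, and for
every node `w` and every `i` in the arity of `D(w)` with `i = pos k`, the
child `D(wi)` is `Trans(P, D(w), X_k)`, where `X_k` is the `k`-th Tier 2
variable of `D(w)` under the enumeration scheme `enum`. -/
def DerSpec (S : Scheme Sig V ar VR) (P : Prog Sig V ar) (C : Clause Sig V ar)
    (enum : (List ℕ → Option (RLab Sig V ar VR)) → ℕ → Option VR)
    (D : List ℕ → Option (Option (Subst Sig V ar))) : Prop :=
  D [] = some (some idS) ∧
  (∀ (w : List ℕ) (σw : Subst Sig V ar), D w = some (some σw) → ∀ i : ℕ,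
    D (w ++ [i]) = (enum (rew S P C σw) i).map (fun X => trans S P C σw X)) ∧
  (∀ w : List ℕ, D w = some none → ∀ i : ℕ, D (w ++ [i]) = none) ∧
  (∀ (w : List ℕ) (i : ℕ), D (w ++ [i]) ≠ none → D w ≠ none)

end T3C

open T3C in
/-- Step function for the derivation tree. -/
noncomputable def derStep {Sig V VR : Type} {ar : Sig → ℕ}
    (S : Scheme Sig V ar VR) (P : Prog Sig V ar) (C : Clause Sig V ar)
    (enum : (List ℕ → Option (RLab Sig V ar VR)) → ℕ → Option VR)
    (i : ℕ) : Option (Option (Subst Sig V ar)) → Option (Option (Subst Sig V ar))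
  | some (some σw) => (enum (rew S P C σw) i).map (fun X => trans S P C σw X)
  | _ => none

open T3C in
/-- The derivation tree, on reversed words. -/
noncomputable def derAux {Sig V VR : Type} {ar : Sig → ℕ}
    (S : Scheme Sig V ar VR) (P : Prog Sig V ar) (C : Clause Sig V ar)
    (enum : (List ℕ → Option (RLab Sig V ar VR)) → ℕ → Option VR) :
    List ℕ → Option (Option (Subst Sig V ar))
  | [] => some (some idS)
  | i :: r => derStep S P C enum i (derAux S P C enum r)

open T3C in
/-- for every logic program `P` and clause `C`, relative to a
fixed scheme (for mgms/mgus, renaming apart, fresh Tier 2 variables, and an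
enumeration `enum` of the Tier 2 variables of each rewriting tree), there
exists a unique derivation tree `D = der(P, C)`: `D(ε) = rew(P, C, id)` and,
for every node `w` and every `i` in the arity of `D(w)` with `i = pos k`,
`D(wi) = Trans(P, D(w), X_k)`. -/
theorem statement13 {Sig V VR : Type} [Nonempty Sig] [Countable V] [Infinite V]
    [Countable VR] [Infinite VR] {ar : Sig → ℕ}
    (S : Scheme Sig V ar VR) (P : Prog Sig V ar) (C : Clause Sig V ar)
    (enum : (List ℕ → Option (RLab Sig V ar VR)) → ℕ → Option VR)
    (henum : ∀ T : List ℕ → Option (RLab Sig V ar VR), Enumerates T (enum T)) :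
    ∃! D : List ℕ → Option (Option (Subst Sig V ar)), DerSpec S P C enum D := by
  have hstep_none : ∀ i, derStep S P C enum i none = none := fun _ => rfl
  have hstep_sn : ∀ i, derStep S P C enum i (some none) = none := fun _ => rfl
  have hstep_ss : ∀ i σw, derStep S P C enum i (some (some σw)) =
      (enum (rew S P C σw) i).map (fun X => trans S P C σw X) := fun _ _ => rfl
  refine ⟨fun w => derAux S P C enum w.reverse, ?_, ?_⟩
  · refine ⟨rfl, ?_, ?_, ?_⟩
    · intro w σw hw i
      dsimp only at hw ⊢
      simp only [List.reverse_append, List.reverse_singleton, List.singleton_append]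
      rw [derAux, hw, hstep_ss]
    · intro w hw i
      dsimp only at hw ⊢
      simp only [List.reverse_append, List.reverse_singleton, List.singleton_append]
      rw [derAux, hw, hstep_sn]
    · intro w i h hcontra
      apply h
      dsimp only at hcontra ⊢
      simp only [List.reverse_append, List.reverse_singleton, List.singleton_append]
      rw [derAux, hcontra, hstep_none]
  · intro D' hD'
    obtain ⟨h0, h1, h2, h3⟩ := hD'
    funext w
    induction w using List.reverseRecOn with
    | nil => simpa [derAux] using h0
    | append_singleton w i ih =>
      simp only [List.reverse_append, List.reverse_singleton, List.singleton_append]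
      rw [derAux, ← ih]
      rcases h : D' w with _ | _ | σw
      · rw [hstep_none]
        by_contra hne
        exact (h3 w i (fun hc => hne hc)) h
      · rw [hstep_sn]
        exact h2 w h i
      · rw [hstep_ss]
        exact h1 w σw h i
end
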